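/- Let c > 0, b > 0, b′ > 0, γ > 0, ρ, ρ′ ∈ ℝ, and u, v, J ∈ ℝ³. Assume the constitutive relation J = c ρ u / b, the transformation laws b′ ρ′ = γ(b ρ − ⟨J, v⟩/c) and b′ = γ(b − ⟨u, v⟩/c), and that 1 − ⟨u, v⟩/(b c) ≠ 0. Then ρ′ = (ρ − ⟨J, v⟩/(b c)) / (1 − ⟨u, v⟩/(b c)) = ρ · (1 − ⟨u, v⟩/b²) / (1 − ⟨u, v⟩/(b c)). In particular, if u = 0 then ρ′ = ρ. -/

import Mathlib

open scoped RealInnerProductSpace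

/-- Transformation of the charge density in the proper-time theory
(equations (13)–(15) of the paper). Assuming `J = cρu/b`, `b′ρ′ = γ(bρ − ⟨J,v⟩/c)` and
`b′ = γ(b − ⟨u,v⟩/c)`, with `1 − ⟨u,v⟩/(bc) ≠ 0`, one gets
`ρ′ = (ρ − ⟨J,v⟩/(bc))/(1 − ⟨u,v⟩/(bc)) = ρ(1 − ⟨u,v⟩/b²)/(1 − ⟨u,v⟩/(bc))`;
in particular a charge at rest (`u = 0`) has `ρ′ = ρ`. -/
theorem stmt5 (c b b' γ : ℝ) (hc : 0 < c) (hb : 0 < b) (hb' : 0 < b') (hγ : 0 < γ)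
    (ρ ρ' : ℝ) (u v J : EuclideanSpace ℝ (Fin 3))
    (hJ : J = (c * ρ / b) • u)
    (hρ' : b' * ρ' = γ * (b * ρ - ⟪J, v⟫ / c))
    (hb'eq : b' = γ * (b - ⟪u, v⟫ / c))
    (hne : 1 - ⟪u, v⟫ / (b * c) ≠ 0) :
    ρ' = (ρ - ⟪J, v⟫ / (b * c)) / (1 - ⟪u, v⟫ / (b * c)) ∧
    ρ' = ρ * (1 - ⟪u, v⟫ / b ^ 2) / (1 - ⟪u, v⟫ / (b * c)) ∧
    (u = 0 → ρ' = ρ) := by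
  have hJv : ⟪J, v⟫ = (c * ρ / b) * ⟪u, v⟫ := by
    rw [hJ, real_inner_smul_left]
  set s : ℝ := ⟪u, v⟫ with hs
  set t : ℝ := ⟪J, v⟫ with ht
  have hb'' : b' = γ * b * (1 - s / (b * c)) := by
    rw [hb'eq]; field_simp
  have hx : γ * b * (1 - s / (b * c)) ≠ 0 := by
    exact mul_ne_zero (by positivity) hne
  have hρ2 : ρ' = γ * (b * ρ - t / c) / b' := by
    rw [eq_div_iff hb'.ne']; linarith [hρ']
  have h1 : ρ' = (ρ - t / (b * c)) / (1 - s / (b * c)) := by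
    rw [hρ2, hb'', div_eq_div_iff hx hne]; field_simp
  have h2 : ρ' = ρ * (1 - s / b ^ 2) / (1 - s / (b * c)) := by
    rw [h1, hJv, div_eq_div_iff hne hne]; field_simp
  refine ⟨h1, h2, fun hu => ?_⟩
  have : s = 0 := by rw [hs, hu]; simp
  rw [h2, this]
  field_simp
  ring
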